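/- For α > 2, θ > 0, and h > 0, the coverage probability for strongest BS association with elevated base stations satisfies P_cov^S(θ,λ) = 2πλ·∫_h^∞ exp(-πλh²·ψ(θ·h^(-α)·r^α))·r dr, and P_cov^S(θ,λ) < exp(-πλh²·ψ(θ))/ψ(θ) for all λ > 0; consequently lim_{λ→∞} P_cov^S(θ,λ) = 0. -/

import Mathlib

open Real MeasureTheory Set Filter Topology

/-- Gauss hypergeometric function `₂F₁(a,b;c;z)` via Euler's integral representation. -/
noncomputable def hyp2F1 (a b c z : ℝ) : ℝ :=
  (Real.Gamma c / (Real.Gamma b * Real.Gamma (c - b))) *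
    ∫ t in Ioo (0 : ℝ) 1, t ^ (b - 1) * (1 - t) ^ (c - b - 1) * (1 - z * t) ^ (-a)

noncomputable def psi (α z : ℝ) : ℝ :=
  (2 * z / (α - 2)) * hyp2F1 1 (1 - 2 / α) (2 - 2 / α) (-z)

/-! ### Auxiliary development -/

/-- The primitive `Φ(z) = ∫_0^z u^{-2/α}/(1+u) du`. -/
noncomputable def phiP (α z : ℝ) : ℝ := ∫ u in (0:ℝ)..z, u ^ (-(2/α)) * (1+u)⁻¹

lemma two_div_lt_one {α : ℝ} (hα : 2 < α) : 2/α < 1 :=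
  (div_lt_one (by linarith)).mpr (by linarith)

lemma intervalIntegrable_phi {α a c : ℝ} (hα : 2 < α) (ha : 0 ≤ a) (hac : a ≤ c) :
    IntervalIntegrable (fun u : ℝ => u ^ (-(2/α)) * (1+u)⁻¹) volume a c := by
  have hexp : (-1:ℝ) < -(2/α) := by have := two_div_lt_one hα; linarith
  refine (intervalIntegral.intervalIntegrable_rpow' hexp (a := a) (b := c)).mono_fun
    (Measurable.aestronglyMeasurable (by fun_prop)) ?_
  filter_upwards [ae_restrict_mem measurableSet_uIoc] with u hu
  rw [uIoc_of_le hac] at hu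
  have hu0 : 0 < u := lt_of_le_of_lt ha hu.1
  have h1 : (0:ℝ) < 1 + u := by linarith
  have hr : (0:ℝ) < u ^ (-(2/α)) := Real.rpow_pos_of_pos hu0 _
  have h2 : (1+u)⁻¹ ≤ 1 := (inv_le_one₀ h1).mpr (by linarith)
  simp only [Real.norm_eq_abs, abs_of_pos hr, abs_of_pos (mul_pos hr (inv_pos.mpr h1))]
  calc u ^ (-(2/α)) * (1+u)⁻¹ ≤ u ^ (-(2/α)) * 1 := by
        exact mul_le_mul_of_nonneg_left h2 hr.le
    _ = u ^ (-(2/α)) := mul_one _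

lemma phiP_pos {α z : ℝ} (hα : 2 < α) (hz : 0 < z) : 0 < phiP α z := by
  refine intervalIntegral.intervalIntegral_pos_of_pos_on
    (intervalIntegrable_phi hα le_rfl hz.le) (fun x hx => ?_) hz
  exact mul_pos (Real.rpow_pos_of_pos hx.1 _) (inv_pos.mpr (by linarith [hx.1]))

lemma phiP_lt {α z w : ℝ} (hα : 2 < α) (hz : 0 < z) (hzw : z < w) : phiP α z < phiP α w := by
  have h1 := intervalIntegrable_phi hα le_rfl hz.le
  have h2 := intervalIntegrable_phi hα hz.le hzw.le
  have hadd := intervalIntegral.integral_add_adjacent_intervals (μ := volume) h1 h2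
  have hpos : 0 < ∫ u in z..w, u ^ (-(2/α)) * (1+u)⁻¹ := by
    refine intervalIntegral.intervalIntegral_pos_of_pos_on h2 (fun x hx => ?_) hzw
    have hx0 : 0 < x := hz.trans hx.1
    exact mul_pos (Real.rpow_pos_of_pos hx0 _) (inv_pos.mpr (by linarith))
  have : phiP α z + ∫ u in z..w, u ^ (-(2/α)) * (1+u)⁻¹ = phiP α w := hadd
  linarith

/-- Key representation: `ψ(z) = (2/α) z^{2/α} Φ(z)` for `z > 0`. -/
lemma psi_eq {α z : ℝ} (hα : 2 < α) (hz : 0 < z) :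
    psi α z = (2/α) * z ^ (2/α) * phiP α z := by
  have hα0 : (0:ℝ) < α := by linarith
  set b : ℝ := 1 - 2/α with hb_def
  have hb : 0 < b := by have := two_div_lt_one hα; simp only [hb_def]; linarith
  have hΓb : 0 < Real.Gamma b := Real.Gamma_pos_of_pos hb
  -- reduce the Euler integrand
  have hcb : 2 - 2/α - (1 - 2/α) = 1 := by ring
  have hI : (∫ t in Ioo (0:ℝ) 1,
      t ^ ((1 - 2/α) - 1) * (1-t) ^ ((1:ℝ) - 1) * (1 - (-z)*t) ^ (-(1:ℝ)))
      = z ^ (2/α) * z⁻¹ * phiP α z := by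
    have e0 : (1:ℝ) - 1 = 0 := by ring
    have e1 : (1 - 2/α) - 1 = -(2/α) := by ring
    have step1 : (∫ t in Ioo (0:ℝ) 1,
        t ^ ((1 - 2/α) - 1) * (1-t) ^ ((1:ℝ) - 1) * (1 - (-z)*t) ^ (-(1:ℝ)))
        = ∫ t in (0:ℝ)..1, t ^ (-(2/α)) * (1 + z*t)⁻¹ := by
      rw [intervalIntegral.integral_of_le zero_le_one, integral_Ioc_eq_integral_Ioo]
      refine setIntegral_congr_fun measurableSet_Ioo (fun t ht => ?_)
      rw [e0, e1, Real.rpow_zero, mul_one]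
      have : 1 - (-z)*t = 1 + z*t := by ring
      rw [this, Real.rpow_neg_one]
    rw [step1]
    -- substitution u = z t
    have hsub : (∫ t in (0:ℝ)..1, ((z*t) ^ (-(2/α)) * (1 + z*t)⁻¹))
        = z⁻¹ * ∫ u in (0:ℝ)..z, u ^ (-(2/α)) * (1+u)⁻¹ := by
      have := intervalIntegral.integral_comp_mul_left
        (a := (0:ℝ)) (b := 1) (fun u : ℝ => u ^ (-(2/α)) * (1+u)⁻¹) hz.ne'
      simpa [smul_eq_mul] using this
    have hcongr : (∫ t in (0:ℝ)..1, ((z*t) ^ (-(2/α)) * (1 + z*t)⁻¹))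
        = ∫ t in (0:ℝ)..1, z ^ (-(2/α)) * (t ^ (-(2/α)) * (1 + z*t)⁻¹) := by
      refine intervalIntegral.integral_congr (fun t ht => ?_)
      rw [uIcc_of_le zero_le_one] at ht
      rw [Real.mul_rpow hz.le ht.1, mul_assoc]
    have hzpow : z ^ (2/α) * z ^ (-(2/α)) = 1 := by
      rw [← Real.rpow_add hz]; norm_num
    rw [hcongr, intervalIntegral.integral_const_mul] at hsub
    have : (∫ t in (0:ℝ)..1, t ^ (-(2/α)) * (1 + z*t)⁻¹)
        = z ^ (2/α) * (z ^ (-(2/α)) * ∫ t in (0:ℝ)..1, t ^ (-(2/α)) * (1 + z*t)⁻¹) := by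
      rw [← mul_assoc, hzpow, one_mul]
    rw [this, hsub, phiP]; ring
  -- assemble
  rw [psi, hyp2F1, hcb, Real.Gamma_one, mul_one]
  have h2 : (2:ℝ) - 2/α = b + 1 := by simp only [hb_def]; ring
  rw [h2, Real.Gamma_add_one hb.ne']
  have hbeq : (1:ℝ) - 2/α = b := rfl
  rw [hbeq] at hI ⊢
  rw [hI]
  have hbval : b = (α - 2)/α := by simp only [hb_def]; field_simp
  have hΓcancel : b * Real.Gamma b / Real.Gamma b = b := mul_div_cancel_right₀ b hΓb.ne'
  rw [hΓcancel, hbval]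
  have hα2 : α - 2 ≠ 0 := sub_ne_zero.mpr (ne_of_gt hα)
  field_simp [hz.ne', hα2, hα0.ne']

lemma psi_pos {α z : ℝ} (hα : 2 < α) (hz : 0 < z) : 0 < psi α z := by
  rw [psi_eq hα hz]
  have := phiP_pos hα hz
  have := Real.rpow_pos_of_pos hz (2/α)
  positivity

lemma measurable_psi (α : ℝ) : Measurable fun z : ℝ => psi α z := by
  unfold psi hyp2F1
  refine Measurable.mul (by fun_prop) (Measurable.mul measurable_const ?_)
  have hF : StronglyMeasurable fun p : ℝ × ℝ =>
      p.2 ^ ((1 - 2/α) - 1) * (1-p.2) ^ (2 - 2/α - (1 - 2/α) - 1) * (1 - (-p.1)*p.2) ^ (-(1:ℝ)) :=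
    Measurable.stronglyMeasurable (by fun_prop)
  exact (hF.integral_prod_right' (ν := volume.restrict (Ioo (0:ℝ) 1))).measurable

/-- Key pointwise inequality. -/
lemma key_ineq {α θ h r : ℝ} (hα : 2 < α) (hθ : 0 < θ) (hh : 0 < h) (hr : h < r) :
    r^2 * psi α θ < h^2 * psi α (θ * h ^ (-α) * r ^ α) := by
  have hα0 : (0:ℝ) < α := by linarith
  have hr0 : 0 < r := hh.trans hr
  set z := θ * h ^ (-α) * r ^ α with hz_def
  have hhp : (0:ℝ) < h ^ (-α) := Real.rpow_pos_of_pos hh _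
  have hrp : (0:ℝ) < r ^ α := Real.rpow_pos_of_pos hr0 _
  have hz0 : 0 < z := by positivity
  -- z = θ * (r/h)^α > θ
  have hzθ : θ < z := by
    have hdiv : h ^ (-α) * r ^ α = (r/h) ^ α := by
      rw [Real.div_rpow hr0.le hh.le, Real.rpow_neg hh.le, div_eq_mul_inv, mul_comm]
    have h1 : 1 < (r/h) ^ α := by
      rw [Real.one_lt_rpow_iff_of_pos (by positivity)]
      exact Or.inl ⟨(one_lt_div hh).mpr hr, hα0⟩
    calc θ = θ * 1 := (mul_one θ).symm
      _ < θ * (r/h) ^ α := by exact mul_lt_mul_of_pos_left h1 hθ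
      _ = z := by rw [hz_def, mul_assoc, hdiv]
  -- z^{2/α} = θ^{2/α} * h⁻² * r²
  have hzpow : z ^ (2/α) = θ ^ (2/α) * (h^2)⁻¹ * r^2 := by
    rw [hz_def, Real.mul_rpow (by positivity) hrp.le, Real.mul_rpow hθ.le hhp.le]
    congr 1
    · congr 1
      rw [← Real.rpow_natCast h 2, ← Real.rpow_neg hh.le, ← Real.rpow_mul hh.le]
      congr 1
      push_cast
      field_simp
      try ring
    · rw [← Real.rpow_natCast r 2, ← Real.rpow_mul hr0.le]
      congr 1
      push_cast
      field_simp
      try ring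
  rw [psi_eq hα hθ, psi_eq hα hz0, hzpow]
  have hΦ : phiP α θ < phiP α z := phiP_lt hα hθ hzθ
  have hc : (0:ℝ) < (2/α) * θ ^ (2/α) * r^2 := by
    have := Real.rpow_pos_of_pos hθ (2/α); positivity
  have hh2 : (0:ℝ) < h^2 := by positivity
  calc r^2 * ((2/α) * θ ^ (2/α) * phiP α θ)
      = (2/α) * θ ^ (2/α) * r^2 * phiP α θ := by ring
    _ < (2/α) * θ ^ (2/α) * r^2 * phiP α z := by exact mul_lt_mul_of_pos_left hΦ hc
    _ = h^2 * ((2/α) * (θ ^ (2/α) * (h^2)⁻¹ * r^2) * phiP α z) := by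
        field_simp

theorem coverage_strongest_bound_and_limit (α θ h : ℝ)
    (hα : 2 < α) (hθ : 0 < θ) (hh : 0 < h) :
    let PcovS : ℝ → ℝ := fun lam =>
      2 * π * lam *
        ∫ r in Ioi h, Real.exp (-(π * lam * h ^ 2 * psi α (θ * h ^ (-α) * r ^ α))) * r
    (∀ lam : ℝ, 0 < lam →
        PcovS lam < Real.exp (-(π * lam * h ^ 2 * psi α θ)) / psi α θ) ∧
      Tendsto PcovS atTop (nhds 0) := by
  intro PcovS
  have hψ : 0 < psi α θ := psi_pos hα hθ
  have hπ : (0:ℝ) < π := Real.pi_pos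
  -- the main bound
  have main : ∀ lam : ℝ, 0 < lam →
      PcovS lam < Real.exp (-(π * lam * h ^ 2 * psi α θ)) / psi α θ := by
    intro lam hlam
    set c : ℝ := π * lam * psi α θ with hc_def
    have hc : 0 < c := by positivity
    set f : ℝ → ℝ := fun r => Real.exp (-(π * lam * h ^ 2 * psi α (θ * h ^ (-α) * r ^ α))) * r
      with hf_def
    set g : ℝ → ℝ := fun r => Real.exp (-(c * r^2)) * r with hg_def
    -- antiderivative of g
    set G : ℝ → ℝ := fun r => -Real.exp (-(c * r^2)) / (2*c) with hG_def
    have hderiv : ∀ x ∈ Ici h, HasDerivAt G (g x) x := by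
      intro x _
      have h1 : HasDerivAt (fun r : ℝ => -(c * r^2)) (-(c * (2*x))) x := by
        have := ((hasDerivAt_pow 2 x).const_mul c).neg
        simpa [pow_one, mul_comm, mul_assoc, Pi.neg_def] using this
      have h2 : HasDerivAt (fun r : ℝ => Real.exp (-(c * r^2)))
          (Real.exp (-(c * x^2)) * (-(c * (2*x)))) x := (Real.hasDerivAt_exp _).comp x h1
      have h3 := (h2.neg).div_const (2*c)
      refine h3.congr_deriv ?_
      field_simp [hg_def]
      ring
    have hgpos : ∀ x ∈ Ioi h, 0 ≤ g x := by
      intro x hx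
      have : 0 < x := hh.trans hx
      positivity
    have hGlim : Tendsto G atTop (𝓝 0) := by
      have h1 : Tendsto (fun r : ℝ => -(c * r^2)) atTop atBot := by
        refine (tendsto_neg_atBot_iff.mpr ?_)
        exact (tendsto_pow_atTop (two_ne_zero)).const_mul_atTop hc
      have h2 : Tendsto (fun r : ℝ => Real.exp (-(c * r^2))) atTop (𝓝 0) :=
        Real.tendsto_exp_atBot.comp h1
      have h3 := (h2.neg).div_const (2*c)
      simpa using h3
    have hgint : IntegrableOn g (Ioi h) volume :=
      integrableOn_Ioi_deriv_of_nonneg' hderiv hgpos hGlim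
    have hgval : ∫ r in Ioi h, g r = Real.exp (-(c * h^2)) / (2*c) := by
      rw [integral_Ioi_of_hasDerivAt_of_nonneg' hderiv hgpos hGlim]
      simp only [hG_def]
      ring
    -- pointwise strict inequality f < g on Ioi h
    have hlt : ∀ x ∈ Ioi h, f x < g x := by
      intro x hx
      have hx0 : 0 < x := hh.trans hx
      have := key_ineq hα hθ hh (mem_Ioi.mp hx)
      have hlt' : c * x^2 < π * lam * h ^ 2 * psi α (θ * h ^ (-α) * x ^ α) := by
        rw [hc_def]
        calc π * lam * psi α θ * x^2 = π * lam * (x^2 * psi α θ) := by ring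
          _ < π * lam * (h^2 * psi α (θ * h ^ (-α) * x ^ α)) := by
              exact mul_lt_mul_of_pos_left this (by positivity)
          _ = π * lam * h ^ 2 * psi α (θ * h ^ (-α) * x ^ α) := by ring
      have := Real.exp_lt_exp.mpr (neg_lt_neg hlt')
      exact mul_lt_mul_of_pos_right this hx0
    -- measurability of f
    have hfm : AEStronglyMeasurable f (volume.restrict (Ioi h)) := by
      have : Measurable f := by
        apply Measurable.mul _ measurable_id
        exact (Real.measurable_exp.comp ((((measurable_psi α).comp
          (by fun_prop : Measurable fun r : ℝ => θ * h ^ (-α) * r ^ α)).const_mul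
          (π * lam * h^2)).neg))
      exact this.aestronglyMeasurable
    have hfnonneg : ∀ x ∈ Ioi h, 0 ≤ f x := by
      intro x hx
      have : 0 < x := hh.trans hx
      positivity
    have hfint : IntegrableOn f (Ioi h) volume := by
      refine hgint.mono' hfm ?_
      filter_upwards [ae_restrict_mem measurableSet_Ioi] with x hx
      rw [Real.norm_eq_abs, abs_of_nonneg (hfnonneg x hx)]
      exact (hlt x hx).le
    -- strict integral inequality
    have hIlt : (∫ r in Ioi h, f r) < ∫ r in Ioi h, g r := by
      have hsub : 0 < ∫ r in Ioi h, (g r - f r) := by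
        rw [setIntegral_pos_iff_support_of_nonneg_ae]
        · have hsupp : Ioi h ⊆ Function.support fun r => g r - f r := fun x hx =>
            (sub_pos.mpr (hlt x hx)).ne'
          have hle : volume (Ioi h) ≤ volume ((Function.support fun r => g r - f r) ∩ Ioi h) :=
            measure_mono (subset_inter hsupp subset_rfl)
          rw [Real.volume_Ioi] at hle
          have htop : volume ((Function.support fun r => g r - f r) ∩ Ioi h) = ⊤ :=
            top_unique hle
          simp [htop]
        · filter_upwards [ae_restrict_mem measurableSet_Ioi] with x hx
          exact sub_nonneg.mpr (hlt x hx).le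
        · exact hgint.sub hfint
      have := integral_sub hgint hfint
      rw [this] at hsub
      linarith
    have hfin : PcovS lam = 2 * π * lam * ∫ r in Ioi h, f r := rfl
    rw [hfin]
    calc 2 * π * lam * ∫ r in Ioi h, f r
        < 2 * π * lam * ∫ r in Ioi h, g r := by
          exact mul_lt_mul_of_pos_left hIlt (by positivity)
      _ = Real.exp (-(π * lam * h ^ 2 * psi α θ)) / psi α θ := by
          rw [hgval]
          have : -(c * h^2) = -(π * lam * h ^ 2 * psi α θ) := by rw [hc_def]; ring
          rw [this]
          field_simp [hc_def]
          ring
  refine ⟨main, ?_⟩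
  -- the limit
  have hub : Tendsto (fun lam : ℝ => Real.exp (-(π * lam * h ^ 2 * psi α θ)) / psi α θ)
      atTop (𝓝 0) := by
    have h1 : Tendsto (fun lam : ℝ => -(π * lam * h ^ 2 * psi α θ)) atTop atBot := by
      have : (fun lam : ℝ => -(π * lam * h ^ 2 * psi α θ))
          = fun lam : ℝ => -(π * h ^ 2 * psi α θ) * lam := by funext lam; ring
      rw [this]
      apply tendsto_id.const_mul_atTop_of_neg
      have : (0:ℝ) < π * h ^ 2 * psi α θ := by positivity
      linarith
    have h2 := Real.tendsto_exp_atBot.comp h1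
    simpa using h2.div_const (psi α θ)
  refine tendsto_of_tendsto_of_tendsto_of_le_of_le' tendsto_const_nhds hub ?_ ?_
  · filter_upwards [eventually_gt_atTop (0:ℝ)] with lam hlam
    have : 0 ≤ ∫ r in Ioi h, Real.exp (-(π * lam * h ^ 2 * psi α (θ * h ^ (-α) * r ^ α))) * r := by
      refine setIntegral_nonneg measurableSet_Ioi (fun x hx => ?_)
      have : 0 < x := hh.trans hx
      positivity
    have h2 : (0:ℝ) ≤ 2 * π * lam := by positivity
    exact mul_nonneg h2 this
  · filter_upwards [eventually_gt_atTop (0:ℝ)] with lam hlam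
    exact (main lam hlam).le
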